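/- arXiv:1509.05137 — 9 statements merged into one kernel-verified Lean document; each statement's English description precedes it below -/
import Mathlib

section
/- Let π_0,…,π_Q, g_{i,m} (0 ≤ i ≤ Q, 1 ≤ m ≤ M), and f_{i,m} (1 ≤ i ≤ Q, 1 ≤ m ≤ M) be real numbers, and suppose the local balance equations α·π_i·Σ_{m=1}^{M} η_m(1−g_{i,m}) = (1−α)·π_{i+1}·Σ_{m=1}^{M} η_m f_{i+1,m} hold for all 0 ≤ i ≤ Q−1. Define y_{i,m} := π_i g_{i,m} + ξ·π_{i+1} f_{i+1,m} for 0 ≤ i ≤ Q−1 and y_{Q,m} := π_Q g_{Q,m}. Then π_i = Σ_{m=1}^{M} η_m y_{i,m} for all 0 ≤ i ≤ Q−1; moreover, if additionally Σ_{m=1}^{M} η_m g_{Q,m} = 1, then also π_Q = Σ_{m=1}^{M} η_m y_{Q,m}. -/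
/- STATEMENT 1: Under the local balance equations, the steady-state
probability π_i equals Σ_m η_m y_{i,m}, where y_{i,m} = π_i g_{i,m} +
ξ π_{i+1} f_{i+1,m} are the transformed LP variables. -/
theorem pi_eq_sum_eta_y
    (Q M : ℕ) (hQ : 1 ≤ Q) (hM : 1 ≤ M)
    (α : ℝ) (hα0 : 0 < α) (hα1 : α < 1)
    (ξ : ℝ) (hξ : ξ = (1 - α) / α)
    (η : ℕ → ℝ) (hη : ∀ m ∈ Finset.Icc 1 M, 0 < η m)
    (hηsum : ∑ m ∈ Finset.Icc 1 M, η m = 1)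
    (pi : ℕ → ℝ) (g f y : ℕ → ℕ → ℝ)
    (hbal : ∀ i, i < Q →
      α * pi i * (∑ m ∈ Finset.Icc 1 M, η m * (1 - g i m)) =
        (1 - α) * pi (i + 1) * (∑ m ∈ Finset.Icc 1 M, η m * f (i + 1) m))
    (hy : ∀ i, i < Q → ∀ m ∈ Finset.Icc 1 M,
      y i m = pi i * g i m + ξ * pi (i + 1) * f (i + 1) m)
    (hyQ : ∀ m ∈ Finset.Icc 1 M, y Q m = pi Q * g Q m) :
    (∀ i, i < Q → pi i = ∑ m ∈ Finset.Icc 1 M, η m * y i m) ∧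
    ((∑ m ∈ Finset.Icc 1 M, η m * g Q m = 1) →
      pi Q = ∑ m ∈ Finset.Icc 1 M, η m * y Q m) := by
  have hαne : α ≠ 0 := ne_of_gt hα0
  constructor
  · intro i hi
    have hsum : ∑ m ∈ Finset.Icc 1 M, η m * y i m
        = pi i * (∑ m ∈ Finset.Icc 1 M, η m * g i m)
          + ξ * pi (i + 1) * (∑ m ∈ Finset.Icc 1 M, η m * f (i + 1) m) := by
      rw [Finset.mul_sum, Finset.mul_sum, ← Finset.sum_add_distrib]
      apply Finset.sum_congr rfl
      intro m hm
      rw [hy i hi m hm]; ring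
    have hb := hbal i hi
    have hsplit : ∑ m ∈ Finset.Icc 1 M, η m * (1 - g i m)
        = 1 - ∑ m ∈ Finset.Icc 1 M, η m * g i m := by
      simp [mul_sub, Finset.sum_sub_distrib, hηsum]
    rw [hsplit] at hb
    have hξf : ξ * pi (i + 1) * (∑ m ∈ Finset.Icc 1 M, η m * f (i + 1) m)
        = pi i * (1 - ∑ m ∈ Finset.Icc 1 M, η m * g i m) := by
      rw [hξ]
      field_simp
      linarith [hb]
    rw [hsum, hξf]; ring
  · intro hgQ
    have : ∑ m ∈ Finset.Icc 1 M, η m * y Q m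
        = pi Q * (∑ m ∈ Finset.Icc 1 M, η m * g Q m) := by
      rw [Finset.mul_sum]
      apply Finset.sum_congr rfl
      intro m hm
      rw [hyQ m hm]; ring
    rw [this, hgQ, mul_one]
end

section
/- (Lemma 1, delay part.) Let π_0,…,π_Q, g_{i,m}, f_{i,m} be real numbers satisfying the local balance equations α·π_i·Σ_{m=1}^{M} η_m(1−g_{i,m}) = (1−α)·π_{i+1}·Σ_{m=1}^{M} η_m f_{i+1,m} for 0 ≤ i ≤ Q−1 and Σ_{m=1}^{M} η_m g_{Q,m} = 1, and define y_{i,m} := π_i g_{i,m} + ξ·π_{i+1} f_{i+1,m} for 0 ≤ i ≤ Q−1 and y_{Q,m} := π_Q g_{Q,m}. Then the average queueing delay satisfies D̄ := (1/α)·Σ_{i=0}^{Q} i·π_i = (1/α)·Σ_{m=1}^{M} Σ_{i=0}^{Q} i·η_m·y_{i,m}; i.e., D̄ is a linear function of the variables y_{i,m}. -/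
/- STATEMENT 2 (Lemma 1, delay part): Under the local balance equations
and Σ_m η_m g_{Q,m} = 1, the average queueing delay
D̄ = (1/α) Σ_i i·π_i equals (1/α) Σ_m Σ_i i·η_m·y_{i,m}, i.e. D̄ is a
linear function of the transformed variables y_{i,m}. -/
theorem avg_delay_linear_in_y
    (Q M : ℕ) (hQ : 1 ≤ Q) (hM : 1 ≤ M)
    (α : ℝ) (hα0 : 0 < α) (hα1 : α < 1)
    (ξ : ℝ) (hξ : ξ = (1 - α) / α)
    (η : ℕ → ℝ) (hη : ∀ m ∈ Finset.Icc 1 M, 0 < η m)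
    (hηsum : ∑ m ∈ Finset.Icc 1 M, η m = 1)
    (pi : ℕ → ℝ) (g f y : ℕ → ℕ → ℝ)
    (hbal : ∀ i, i < Q →
      α * pi i * (∑ m ∈ Finset.Icc 1 M, η m * (1 - g i m)) =
        (1 - α) * pi (i + 1) * (∑ m ∈ Finset.Icc 1 M, η m * f (i + 1) m))
    (hgQ : ∑ m ∈ Finset.Icc 1 M, η m * g Q m = 1)
    (hy : ∀ i, i < Q → ∀ m ∈ Finset.Icc 1 M,
      y i m = pi i * g i m + ξ * pi (i + 1) * f (i + 1) m)
    (hyQ : ∀ m ∈ Finset.Icc 1 M, y Q m = pi Q * g Q m) :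
    (1 / α) * ∑ i ∈ Finset.range (Q + 1), (i : ℝ) * pi i =
      (1 / α) * ∑ m ∈ Finset.Icc 1 M, ∑ i ∈ Finset.range (Q + 1),
        (i : ℝ) * η m * y i m := by
  rw [Finset.sum_comm]
  congr 1
  apply Finset.sum_congr rfl
  intro i hi
  have key : ∑ m ∈ Finset.Icc 1 M, η m * y i m = pi i := by
    rcases lt_or_eq_of_le (Nat.lt_succ_iff.mp (Finset.mem_range.mp hi)) with h | h
    · have hb := hbal i h
      have h1 : ∑ m ∈ Finset.Icc 1 M, η m * (1 - g i m)
          = 1 - ∑ m ∈ Finset.Icc 1 M, η m * g i m := by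
        have hc : ∀ m ∈ Finset.Icc 1 M, η m * (1 - g i m) = η m - η m * g i m := by
          intro m hm; ring
        rw [Finset.sum_congr rfl hc, Finset.sum_sub_distrib, hηsum]
      rw [h1] at hb
      have expand : ∑ m ∈ Finset.Icc 1 M, η m * y i m
          = pi i * (∑ m ∈ Finset.Icc 1 M, η m * g i m)
            + ξ * (pi (i + 1) * ∑ m ∈ Finset.Icc 1 M, η m * f (i + 1) m) := by
        rw [Finset.mul_sum, Finset.mul_sum, Finset.mul_sum, ← Finset.sum_add_distrib]
        apply Finset.sum_congr rfl
        intro m hm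
        rw [hy i h m hm]; ring
      rw [expand, hξ]
      set A := pi (i + 1) * ∑ m ∈ Finset.Icc 1 M, η m * f (i + 1) m with hA
      set B := ∑ m ∈ Finset.Icc 1 M, η m * g i m with hB
      have hb' : (1 - α) * A = α * (pi i - pi i * B) := by
        rw [hA]; nlinarith [hb]
      have hαne : α ≠ 0 := ne_of_gt hα0
      field_simp
      linarith [hb']
    · subst h
      calc ∑ m ∈ Finset.Icc 1 M, η m * y i m
          = pi i * ∑ m ∈ Finset.Icc 1 M, η m * g i m := by
            rw [Finset.mul_sum]
            apply Finset.sum_congr rfl; intro m hm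
            rw [hyQ m hm]; ring
        _ = pi i := by rw [hgQ, mul_one]
  calc (i : ℝ) * pi i = (i : ℝ) * ∑ m ∈ Finset.Icc 1 M, η m * y i m := by rw [key]
    _ = ∑ m ∈ Finset.Icc 1 M, (i : ℝ) * η m * y i m := by
        rw [Finset.mul_sum]; apply Finset.sum_congr rfl; intro m hm; ring
end

section
/- Let π_0,…,π_Q ≥ 0 and let g_{i,m}, f_{i,m} ∈ [0,1] satisfy the local balance equations α·π_i·Σ_{m=1}^{M} η_m(1−g_{i,m}) = (1−α)·π_{i+1}·Σ_{m=1}^{M} η_m f_{i+1,m} for 0 ≤ i ≤ Q−1 and Σ_{m=1}^{M} η_m g_{Q,m} = 1. Define y_{i,m} := π_i g_{i,m} + ξ·π_{i+1} f_{i+1,m} for 0 ≤ i ≤ Q−1, y_{Q,m} := π_Q g_{Q,m}, and y_{Q+1,m} := 0. Then for all 0 ≤ i ≤ Q and 1 ≤ m ≤ M, the LP inequality constraints hold: 0 ≤ y_{i,m} ≤ Σ_{n=1}^{M} η_n y_{i,n} + ξ·Σ_{n=1}^{M} η_n y_{i+1,n}. -/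
/- STATEMENT 4: For any stochastic scheduling policy (π ≥ 0, g,f ∈ [0,1],
local balance, Σ_m η_m g_{Q,m} = 1), the transformed variables
y_{i,m} = π_i g_{i,m} + ξ π_{i+1} f_{i+1,m} (with y_{Q+1,m} := 0) satisfy
the LP inequality constraints
0 ≤ y_{i,m} ≤ Σ_n η_n y_{i,n} + ξ Σ_n η_n y_{i+1,n}. -/
theorem y_satisfies_LP_constraints
    (Q M : ℕ) (hQ : 1 ≤ Q) (hM : 1 ≤ M)
    (α : ℝ) (hα0 : 0 < α) (hα1 : α < 1)
    (ξ : ℝ) (hξ : ξ = (1 - α) / α)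
    (η : ℕ → ℝ) (hη : ∀ m ∈ Finset.Icc 1 M, 0 < η m)
    (hηsum : ∑ m ∈ Finset.Icc 1 M, η m = 1)
    (pi : ℕ → ℝ) (g f y : ℕ → ℕ → ℝ)
    (hpi_nonneg : ∀ i, i ≤ Q → 0 ≤ pi i)
    (hg : ∀ i, i ≤ Q → ∀ m ∈ Finset.Icc 1 M, g i m ∈ Set.Icc (0 : ℝ) 1)
    (hf : ∀ i, 1 ≤ i → i ≤ Q → ∀ m ∈ Finset.Icc 1 M, f i m ∈ Set.Icc (0 : ℝ) 1)
    (hbal : ∀ i, i < Q →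
      α * pi i * (∑ m ∈ Finset.Icc 1 M, η m * (1 - g i m)) =
        (1 - α) * pi (i + 1) * (∑ m ∈ Finset.Icc 1 M, η m * f (i + 1) m))
    (hgQ : ∑ m ∈ Finset.Icc 1 M, η m * g Q m = 1)
    (hy : ∀ i, i < Q → ∀ m ∈ Finset.Icc 1 M,
      y i m = pi i * g i m + ξ * pi (i + 1) * f (i + 1) m)
    (hyQ : ∀ m ∈ Finset.Icc 1 M, y Q m = pi Q * g Q m)
    (hyQ1 : ∀ m ∈ Finset.Icc 1 M, y (Q + 1) m = 0) :
    ∀ i, i ≤ Q → ∀ m ∈ Finset.Icc 1 M,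
      0 ≤ y i m ∧
      y i m ≤ ∑ n ∈ Finset.Icc 1 M, η n * y i n +
        ξ * ∑ n ∈ Finset.Icc 1 M, η n * y (i + 1) n := by
  have hαne : α ≠ 0 := ne_of_gt hα0
  have hξ0 : 0 ≤ ξ := by rw [hξ]; exact div_nonneg (by linarith) hα0.le
  -- key: ∑ η n * y i n = pi i for i ≤ Q
  have key : ∀ i, i ≤ Q → ∑ n ∈ Finset.Icc 1 M, η n * y i n = pi i := by
    intro i hi
    rcases lt_or_eq_of_le hi with hlt | heq
    · have h1 : ∑ n ∈ Finset.Icc 1 M, η n * y i n =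
          pi i * (∑ n ∈ Finset.Icc 1 M, η n * g i n) +
          ξ * pi (i + 1) * (∑ n ∈ Finset.Icc 1 M, η n * f (i + 1) n) := by
        rw [Finset.mul_sum, Finset.mul_sum, ← Finset.sum_add_distrib]
        refine Finset.sum_congr rfl fun n hn => ?_
        rw [hy i hlt n hn]; ring
      have h2 : ∑ n ∈ Finset.Icc 1 M, η n * (1 - g i n) =
          1 - ∑ n ∈ Finset.Icc 1 M, η n * g i n := by
        have h2' : ∑ n ∈ Finset.Icc 1 M, η n * (1 - g i n) =
            ∑ n ∈ Finset.Icc 1 M, (η n - η n * g i n) :=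
          Finset.sum_congr rfl fun n _ => by ring
        rw [h2', Finset.sum_sub_distrib, hηsum]
      have hb := hbal i hlt
      rw [h2] at hb
      have h3 : ξ * pi (i + 1) * (∑ n ∈ Finset.Icc 1 M, η n * f (i + 1) n) =
          pi i * (1 - ∑ n ∈ Finset.Icc 1 M, η n * g i n) := by
        rw [hξ]
        field_simp
        linarith [hb]
      rw [h1, h3]; ring
    · subst heq
      calc ∑ n ∈ Finset.Icc 1 M, η n * y i n
          = pi i * ∑ n ∈ Finset.Icc 1 M, η n * g i n := by
            rw [Finset.mul_sum]
            exact Finset.sum_congr rfl fun n hn => by rw [hyQ n hn]; ring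
        _ = pi i := by rw [hgQ, mul_one]
  intro i hi m hm
  rcases lt_or_eq_of_le hi with hlt | heq
  · have hfm := hf (i + 1) (Nat.le_add_left 1 i) hlt m hm
    have hgm := hg i hi m hm
    have hpi := hpi_nonneg i hi
    have hpi1 := hpi_nonneg (i + 1) hlt
    have hyv := hy i hlt m hm
    constructor
    · rw [hyv]
      have : 0 ≤ pi i * g i m := mul_nonneg hpi hgm.1
      have : 0 ≤ ξ * pi (i + 1) * f (i + 1) m :=
        mul_nonneg (mul_nonneg hξ0 hpi1) hfm.1
      linarith
    · rw [key i hi, key (i + 1) hlt, hyv]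
      have h1 : pi i * g i m ≤ pi i := by nlinarith [hgm.2]
      have h2 : ξ * pi (i + 1) * f (i + 1) m ≤ ξ * pi (i + 1) := by
        nlinarith [hfm.2, mul_nonneg hξ0 hpi1]
      linarith
  · subst heq
    have hgm := hg i le_rfl m hm
    have hpi := hpi_nonneg i le_rfl
    have hzero : ∑ n ∈ Finset.Icc 1 M, η n * y (i + 1) n = 0 := by
      refine Finset.sum_eq_zero fun n hn => by rw [hyQ1 n hn, mul_zero]
    constructor
    · rw [hyQ m hm]; exact mul_nonneg hpi hgm.1
    · rw [key i le_rfl, hzero, mul_zero, add_zero, hyQ m hm]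
      nlinarith [hgm.2]
end

section
/- Let y = (y_{i,m})_{0≤i≤Q,1≤m≤M} be real numbers, set y_{Q+1,m} := 0, and suppose y satisfies the LP constraints (b) Σ_{i=0}^{Q} Σ_{m=1}^{M} η_m y_{i,m} = 1 and (c) 0 ≤ y_{i,m} ≤ Σ_{n=1}^{M} η_n y_{i,n} + ξ·Σ_{n=1}^{M} η_n y_{i+1,n} for all 0 ≤ i ≤ Q and 1 ≤ m ≤ M. Define π_i := Σ_{m=1}^{M} η_m y_{i,m} for 0 ≤ i ≤ Q and π_{Q+1} := 0. Then π_i ≥ 0, Σ_{i=0}^{Q} π_i = 1, and there exist g_{i,m}, f_{i,m} ∈ [0,1] such that y_{i,m} = π_i g_{i,m} + ξ·π_{i+1} f_{i+1,m} for all 0 ≤ i ≤ Q and 1 ≤ m ≤ M, and moreover the local balance equations α·π_i·Σ_{m=1}^{M} η_m(1−g_{i,m}) = (1−α)·π_{i+1}·Σ_{m=1}^{M} η_m f_{i+1,m} hold for all 0 ≤ i ≤ Q−1. -/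
/- STATEMENT 5 (converse of the LP transformation): Every family y
satisfying the LP constraints (b) and (c) arises from a valid stochastic
scheduling policy: with π_i := Σ_m η_m y_{i,m}, one has π ≥ 0, Σ π_i = 1,
and there exist transmission probabilities g, f ∈ [0,1] with
y_{i,m} = π_i g_{i,m} + ξ π_{i+1} f_{i+1,m} satisfying the local balance
equations. -/
theorem LP_constraints_give_policy
    (Q M : ℕ) (hQ : 1 ≤ Q) (hM : 1 ≤ M)
    (α : ℝ) (hα0 : 0 < α) (hα1 : α < 1)
    (ξ : ℝ) (hξ : ξ = (1 - α) / α)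
    (η : ℕ → ℝ) (hη : ∀ m ∈ Finset.Icc 1 M, 0 < η m)
    (hηsum : ∑ m ∈ Finset.Icc 1 M, η m = 1)
    (y : ℕ → ℕ → ℝ)
    (hyQ1 : ∀ m ∈ Finset.Icc 1 M, y (Q + 1) m = 0)
    (hb : ∑ i ∈ Finset.range (Q + 1), ∑ m ∈ Finset.Icc 1 M, η m * y i m = 1)
    (hc : ∀ i, i ≤ Q → ∀ m ∈ Finset.Icc 1 M,
      0 ≤ y i m ∧
      y i m ≤ ∑ n ∈ Finset.Icc 1 M, η n * y i n +
        ξ * ∑ n ∈ Finset.Icc 1 M, η n * y (i + 1) n)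
    (pi : ℕ → ℝ)
    (hpidef : ∀ i, i ≤ Q + 1 → pi i = ∑ m ∈ Finset.Icc 1 M, η m * y i m) :
    (∀ i, i ≤ Q → 0 ≤ pi i) ∧
    (∑ i ∈ Finset.range (Q + 1), pi i = 1) ∧
    ∃ g f : ℕ → ℕ → ℝ,
      (∀ i, i ≤ Q → ∀ m ∈ Finset.Icc 1 M,
        g i m ∈ Set.Icc (0 : ℝ) 1 ∧ f (i + 1) m ∈ Set.Icc (0 : ℝ) 1 ∧
        y i m = pi i * g i m + ξ * pi (i + 1) * f (i + 1) m) ∧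
      (∀ i, i < Q →
        α * pi i * (∑ m ∈ Finset.Icc 1 M, η m * (1 - g i m)) =
          (1 - α) * pi (i + 1) * (∑ m ∈ Finset.Icc 1 M, η m * f (i + 1) m)) := by
  have hξpos : 0 < ξ := by
    rw [hξ]; exact div_pos (by linarith) hα0
  have hpinn : ∀ j, j ≤ Q + 1 → 0 ≤ pi j := by
    intro j hj
    rw [hpidef j hj]
    rcases Nat.lt_or_ge j (Q + 1) with h | h
    · exact Finset.sum_nonneg fun m hm =>
        mul_nonneg (hη m hm).le ((hc j (Nat.lt_succ_iff.mp h) m hm).1)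
    · have hje : j = Q + 1 := le_antisymm hj h
      subst hje
      apply le_of_eq
      exact (Finset.sum_eq_zero fun m hm => by rw [hyQ1 m hm, mul_zero]).symm
  -- D i = pi i + ξ * pi (i+1); key bounds
  set D : ℕ → ℝ := fun i => pi i + ξ * pi (i + 1) with hDdef
  have hDnn : ∀ i, i ≤ Q → 0 ≤ D i := fun i hi =>
    add_nonneg (hpinn i (le_trans hi (Nat.le_succ Q)))
      (mul_nonneg hξpos.le (hpinn (i + 1) (by omega)))
  have hybd : ∀ i, i ≤ Q → ∀ m ∈ Finset.Icc 1 M, 0 ≤ y i m ∧ y i m ≤ D i := by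
    intro i hi m hm
    refine ⟨(hc i hi m hm).1, ?_⟩
    have := (hc i hi m hm).2
    rw [hDdef]
    simp only
    rw [hpidef i (by omega), hpidef (i + 1) (by omega)]
    exact this
  have hDzero : ∀ i, i ≤ Q → D i = 0 → pi i = 0 ∧ pi (i + 1) = 0 := by
    intro i hi h0
    have h1 : 0 ≤ pi i := hpinn i (by omega)
    have h2 : 0 ≤ pi (i + 1) := hpinn (i + 1) (by omega)
    have hD : pi i + ξ * pi (i + 1) = 0 := h0
    constructor
    · nlinarith
    · nlinarith
  refine ⟨fun i hi => hpinn i (by omega), ?_, ?_⟩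
  · rw [Finset.sum_congr rfl fun i hi =>
      hpidef i (by have := Finset.mem_range.mp hi; omega)]
    exact hb
  · refine ⟨fun i m => if D i = 0 then 0 else y i m / D i,
      fun j m => if D (j - 1) = 0 then 0 else y (j - 1) m / D (j - 1), ?_, ?_⟩
    · intro i hi m hm
      have hsimp : (i + 1 : ℕ) - 1 = i := by omega
      obtain ⟨hy0, hyD⟩ := hybd i hi m hm
      by_cases h0 : D i = 0
      · obtain ⟨hp0, hp1⟩ := hDzero i hi h0
        have hy : y i m = 0 := le_antisymm (by rw [← h0]; exact hyD) hy0
        simp [h0, hsimp, hy, hp0, hp1]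
      · have hDpos : 0 < D i := lt_of_le_of_ne (hDnn i hi) (Ne.symm h0)
        have hmem : y i m / D i ∈ Set.Icc (0 : ℝ) 1 :=
          ⟨div_nonneg hy0 hDpos.le, (div_le_one hDpos).mpr hyD⟩
        simp only [h0, if_false, hsimp]
        refine ⟨hmem, hmem, ?_⟩
        field_simp
        ring
    · intro i hiQ
      have hi : i ≤ Q := hiQ.le
      have hsimp : (i + 1 : ℕ) - 1 = i := by omega
      have hsum_y : ∑ m ∈ Finset.Icc 1 M, η m * y i m = pi i :=
        (hpidef i (by omega)).symm
      by_cases h0 : D i = 0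
      · obtain ⟨hp0, hp1⟩ := hDzero i hi h0
        simp [hp0, hp1]
      · have hDpos : 0 < D i := lt_of_le_of_ne (hDnn i hi) (Ne.symm h0)
        have hg : ∑ m ∈ Finset.Icc 1 M, η m * (y i m / D i) = pi i / D i := by
          rw [← hsum_y, Finset.sum_div]
          exact Finset.sum_congr rfl fun m _ => by ring
        simp only [h0, if_false, hsimp]
        have h1 : ∑ m ∈ Finset.Icc 1 M, η m * (1 - y i m / D i)
            = 1 - pi i / D i := by
          rw [Finset.sum_congr rfl (fun m _ => by ring :
            ∀ m ∈ Finset.Icc 1 M, η m * (1 - y i m / D i) = η m - η m * (y i m / D i)),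
            Finset.sum_sub_distrib, hηsum, hg]
        rw [h1, hg]
        have hαξ : α * ξ = 1 - α := by
          rw [hξ]; field_simp
        have hD1 : 1 - pi i / D i = ξ * pi (i + 1) / D i := by
          field_simp
          rw [hDdef]; ring
        rw [hD1]
        field_simp
        linear_combination pi i * pi (i + 1) * hαξ
end

section
/- Every LP-feasible family y satisfies D̄(y) ≥ 0. Moreover, if y is LP-feasible and D̄(y) = 0, then necessarily y_{i,m} = 0 for all i ≥ 1 and all m, y_{0,m} = 1 for all 1 ≤ m ≤ M, and P̄(y) = P_th. Consequently, there exists an LP-feasible y with D̄(y) = 0 if and only if p_max ≥ P_th, where P_th := α·Σ_{m=1}^{M} η_m P_m. -/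
/-- LP feasibility (problem (17) of the paper): with the convention
`y (Q+1) m = 0`, the family `y` satisfies the power constraint (a),
the normalization constraint (b), and the inequality constraints (c). -/
def LPfeasible (Q M : ℕ) (α ξ : ℝ) (η Pw : ℕ → ℝ) (pmax : ℝ)
    (y : ℕ → ℕ → ℝ) : Prop :=
  (∀ m ∈ Finset.Icc 1 M, y (Q + 1) m = 0) ∧
  (α * ∑ i ∈ Finset.range (Q + 1), ∑ m ∈ Finset.Icc 1 M, η m * Pw m * y i m ≤ pmax) ∧
  (∑ i ∈ Finset.range (Q + 1), ∑ m ∈ Finset.Icc 1 M, η m * y i m = 1) ∧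
  (∀ i, i ≤ Q → ∀ m ∈ Finset.Icc 1 M,
    0 ≤ y i m ∧
    y i m ≤ ∑ n ∈ Finset.Icc 1 M, η n * y i n +
      ξ * ∑ n ∈ Finset.Icc 1 M, η n * y (i + 1) n)

/-- Average queueing delay `D̄(y) = (1/α) Σ_i Σ_m i·η_m·y_{i,m}`. -/
noncomputable def avgDelay (Q M : ℕ) (α : ℝ) (η : ℕ → ℝ) (y : ℕ → ℕ → ℝ) : ℝ :=
  (1 / α) * ∑ i ∈ Finset.range (Q + 1), ∑ m ∈ Finset.Icc 1 M, (i : ℝ) * η m * y i m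

/-- Average power `P̄(y) = α Σ_i Σ_m η_m·P_m·y_{i,m}`. -/
noncomputable def avgPower (Q M : ℕ) (α : ℝ) (η Pw : ℕ → ℝ) (y : ℕ → ℕ → ℝ) : ℝ :=
  α * ∑ i ∈ Finset.range (Q + 1), ∑ m ∈ Finset.Icc 1 M, η m * Pw m * y i m

/- STATEMENT 6: Every LP-feasible y has D̄(y) ≥ 0; if D̄(y) = 0 then
y_{i,m} = 0 for i ≥ 1, y_{0,m} = 1 for all m, and P̄(y) = P_th;
and an LP-feasible y with zero delay exists iff p_max ≥ P_th. -/
theorem zero_delay_characterization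
    (Q M : ℕ) (hQ : 1 ≤ Q) (hM : 1 ≤ M)
    (α : ℝ) (hα0 : 0 < α) (hα1 : α < 1)
    (ξ : ℝ) (hξ : ξ = (1 - α) / α)
    (η Pw : ℕ → ℝ) (hη : ∀ m ∈ Finset.Icc 1 M, 0 < η m)
    (hηsum : ∑ m ∈ Finset.Icc 1 M, η m = 1)
    (hP1 : 0 < Pw 1) (hPmono : ∀ m, 1 ≤ m → m < M → Pw m ≤ Pw (m + 1))
    (pmax : ℝ) (hpmax : 0 < pmax)
    (Pth : ℝ) (hPth : Pth = α * ∑ m ∈ Finset.Icc 1 M, η m * Pw m) :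
    (∀ y, LPfeasible Q M α ξ η Pw pmax y → 0 ≤ avgDelay Q M α η y) ∧
    (∀ y, LPfeasible Q M α ξ η Pw pmax y → avgDelay Q M α η y = 0 →
      (∀ i, 1 ≤ i → i ≤ Q → ∀ m ∈ Finset.Icc 1 M, y i m = 0) ∧
      (∀ m ∈ Finset.Icc 1 M, y 0 m = 1) ∧
      avgPower Q M α η Pw y = Pth) ∧
    ((∃ y, LPfeasible Q M α ξ η Pw pmax y ∧ avgDelay Q M α η y = 0) ↔
      Pth ≤ pmax) := by
  have hξ0 : 0 ≤ ξ := by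
    rw [hξ]; apply div_nonneg <;> linarith
  -- Part 1
  have part1 : ∀ y, LPfeasible Q M α ξ η Pw pmax y → 0 ≤ avgDelay Q M α η y := by
    intro y hy
    obtain ⟨hQ1, ha, hb, hc⟩ := hy
    apply mul_nonneg (by positivity)
    apply Finset.sum_nonneg; intro i hi
    apply Finset.sum_nonneg; intro m hm
    have h1 := (hc i (Nat.lt_succ_iff.mp (Finset.mem_range.mp hi)) m hm).1
    have h2 := (hη m hm).le
    positivity
  -- Part 2
  have part2 : ∀ y, LPfeasible Q M α ξ η Pw pmax y → avgDelay Q M α η y = 0 →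
      (∀ i, 1 ≤ i → i ≤ Q → ∀ m ∈ Finset.Icc 1 M, y i m = 0) ∧
      (∀ m ∈ Finset.Icc 1 M, y 0 m = 1) ∧
      avgPower Q M α η Pw y = Pth := by
    intro y hy hD
    obtain ⟨hQ1, ha, hb, hc⟩ := hy
    have hS : ∑ i ∈ Finset.range (Q + 1), ∑ m ∈ Finset.Icc 1 M,
        (i : ℝ) * η m * y i m = 0 := by
      unfold avgDelay at hD
      rcases mul_eq_zero.mp hD with h | h
      · exfalso; have : (1:ℝ)/α > 0 := by positivity
        linarith
      · exact h
    have hinner : ∀ i ∈ Finset.range (Q + 1),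
        ∑ m ∈ Finset.Icc 1 M, (i : ℝ) * η m * y i m = 0 := by
      intro i hi
      refine (Finset.sum_eq_zero_iff_of_nonneg ?_).mp hS i hi
      intro j hj
      apply Finset.sum_nonneg; intro m hm
      have h1 := (hc j (Nat.lt_succ_iff.mp (Finset.mem_range.mp hj)) m hm).1
      have h2 := (hη m hm).le
      positivity
    have hterm : ∀ i ∈ Finset.range (Q + 1), ∀ m ∈ Finset.Icc 1 M,
        (i : ℝ) * η m * y i m = 0 := by
      intro i hi
      intro m hm
      refine (Finset.sum_eq_zero_iff_of_nonneg ?_).mp (hinner i hi) m hm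
      intro n hn
      have h1 := (hc i (Nat.lt_succ_iff.mp (Finset.mem_range.mp hi)) n hn).1
      have h2 := (hη n hn).le
      positivity
    have hzero : ∀ i, 1 ≤ i → i ≤ Q → ∀ m ∈ Finset.Icc 1 M, y i m = 0 := by
      intro i hi1 hiQ m hm
      have h := hterm i (Finset.mem_range.mpr (Nat.lt_succ_of_le hiQ)) m hm
      have hi0 : (i : ℝ) ≠ 0 := Nat.cast_ne_zero.mpr (by omega)
      have hη0 : η m ≠ 0 := (hη m hm).ne'
      exact (mul_eq_zero.mp h).resolve_left (mul_ne_zero hi0 hη0)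
    -- inner sums for i ≥ 1 vanish
    have hinnerz : ∀ f : ℕ → ℝ, ∀ i, 1 ≤ i → i ≤ Q →
        ∑ m ∈ Finset.Icc 1 M, f m * y i m = 0 := by
      intro f i hi1 hiQ
      apply Finset.sum_eq_zero
      intro m hm
      rw [hzero i hi1 hiQ m hm, mul_zero]
    have hY0 : ∑ m ∈ Finset.Icc 1 M, η m * y 0 m = 1 := by
      rw [← hb]
      symm
      apply Finset.sum_eq_single_of_mem 0 (Finset.mem_range.mpr (Nat.succ_pos Q))
      intro i hi hi0
      exact hinnerz η i (Nat.one_le_iff_ne_zero.mpr hi0)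
        (Nat.lt_succ_iff.mp (Finset.mem_range.mp hi))
    have hle1 : ∀ m ∈ Finset.Icc 1 M, y 0 m ≤ 1 := by
      intro m hm
      have h := (hc 0 (Nat.zero_le Q) m hm).2
      have h1 : ∑ n ∈ Finset.Icc 1 M, η n * y (0 + 1) n = 0 :=
        hinnerz η 1 le_rfl hQ
      rw [h1, mul_zero, add_zero, hY0] at h
      exact h
    have hy0 : ∀ m ∈ Finset.Icc 1 M, y 0 m = 1 := by
      have hsum0 : ∑ m ∈ Finset.Icc 1 M, η m * (1 - y 0 m) = 0 := by
        simp only [mul_sub, mul_one]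
        rw [Finset.sum_sub_distrib, hηsum, hY0, sub_self]
      intro m hm
      have h := (Finset.sum_eq_zero_iff_of_nonneg ?_).mp hsum0 m hm
      · rcases mul_eq_zero.mp h with h' | h'
        · exact absurd h' (hη m hm).ne'
        · linarith
      · intro n hn
        have := hle1 n hn
        have := (hη n hn).le
        nlinarith
    refine ⟨hzero, hy0, ?_⟩
    unfold avgPower
    rw [hPth]
    congr 1
    rw [Finset.sum_eq_single_of_mem 0 (Finset.mem_range.mpr (Nat.succ_pos Q))]
    · apply Finset.sum_congr rfl
      intro m hm
      rw [hy0 m hm, mul_one]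
    · intro i hi hi0
      exact hinnerz (fun m => η m * Pw m) i (Nat.one_le_iff_ne_zero.mpr hi0)
        (Nat.lt_succ_iff.mp (Finset.mem_range.mp hi))
  refine ⟨part1, part2, ?_⟩
  constructor
  · rintro ⟨y, hy, hD⟩
    obtain ⟨_, _, hP⟩ := part2 y hy hD
    have ha := hy.2.1
    unfold avgPower at hP
    linarith
  · intro hple
    refine ⟨fun i _ => if i = 0 then 1 else 0, ⟨?_, ?_, ?_, ?_⟩, ?_⟩
    · intro m _; simp
    · have : ∑ i ∈ Finset.range (Q + 1), ∑ m ∈ Finset.Icc 1 M,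
          η m * Pw m * (if i = 0 then (1:ℝ) else 0) =
          ∑ m ∈ Finset.Icc 1 M, η m * Pw m := by
        rw [Finset.sum_eq_single_of_mem 0 (Finset.mem_range.mpr (Nat.succ_pos Q))]
        · simp
        · intro i _ hi0; simp [hi0]
      rw [this, ← hPth]
      exact hple
    · rw [Finset.sum_eq_single_of_mem 0 (Finset.mem_range.mpr (Nat.succ_pos Q))]
      · simpa using hηsum
      · intro i _ hi0; simp [hi0]
    · intro i hiQ m hm
      rcases Nat.eq_zero_or_pos i with h0 | hpos
      · subst h0
        constructor
        · simp
        · have h1 : ∑ n ∈ Finset.Icc 1 M, η n * (if (0:ℕ) = 0 then (1:ℝ) else 0) = 1 := by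
            simpa using hηsum
          have h2 : ∑ n ∈ Finset.Icc 1 M, η n * (if (0:ℕ) + 1 = 0 then (1:ℝ) else 0) = 0 := by
            simp
          rw [h1, h2, mul_zero, add_zero]
          simp
      · have hi0 : i ≠ 0 := Nat.pos_iff_ne_zero.mp hpos
        constructor
        · simp [hi0]
        · have hi1 : i + 1 ≠ 0 := Nat.succ_ne_zero i
          simp [hi0, hi1]
    · unfold avgDelay
      have : ∑ i ∈ Finset.range (Q + 1), ∑ m ∈ Finset.Icc 1 M,
          (i : ℝ) * η m * (if i = 0 then (1:ℝ) else 0) = 0 := by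
        apply Finset.sum_eq_zero
        intro i _
        rcases Nat.eq_zero_or_pos i with h0 | hpos
        · subst h0; simp
        · apply Finset.sum_eq_zero; intro m _
          simp [Nat.pos_iff_ne_zero.mp hpos]
      rw [this, mul_zero]
end

section
/- (Corollary 1.) Assume p_max < P_th, and let y* be an LP-feasible family with D̄(y*) ≤ D̄(y) for every LP-feasible y, which has the threshold structure of Theorem 1 with thresholds 0 = i_1* ≤ i_2* ≤ … ≤ i_M* ≤ Q. Then y*_{i,m} = 0 for every i > i_M* and every m ∈ {1,…,M}; consequently π_i* := Σ_{m=1}^{M} η_m y*_{i,m} = 0 for all i > i_M*, i.e., the optimal queue length never exceeds i_M*. -/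
/- STATEMENT 8 (Corollary 1): If p_max < P_th and y* is a delay-optimal
LP-feasible family with the threshold structure of Theorem 1, then
y*_{i,m} = 0 for every i > i_M* and every m, hence π_i* = Σ_m η_m y*_{i,m} = 0
for all i > i_M*: the optimal queue length never exceeds i_M*. -/
theorem queue_never_exceeds_top_threshold
    (Q M : ℕ) (hQ : 1 ≤ Q) (hM : 1 ≤ M)
    (α : ℝ) (hα0 : 0 < α) (hα1 : α < 1)
    (ξ : ℝ) (hξ : ξ = (1 - α) / α)
    (η Pw : ℕ → ℝ) (hη : ∀ m ∈ Finset.Icc 1 M, 0 < η m)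
    (hηsum : ∑ m ∈ Finset.Icc 1 M, η m = 1)
    (hP1 : 0 < Pw 1) (hPmono : ∀ m, 1 ≤ m → m < M → Pw m ≤ Pw (m + 1))
    (pmax : ℝ) (hpmax : 0 < pmax)
    (Pth : ℝ) (hPth : Pth = α * ∑ m ∈ Finset.Icc 1 M, η m * Pw m)
    (hlt : pmax < Pth)
    (y : ℕ → ℕ → ℝ) (th : ℕ → ℕ) (mt : ℕ)
    (hfeas : LPfeasible Q M α ξ η Pw pmax y)
    (hopt : ∀ z, LPfeasible Q M α ξ η Pw pmax z →
      avgDelay Q M α η y ≤ avgDelay Q M α η z)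
    (hth1 : th 1 = 0)
    (hthmono : ∀ m, 1 ≤ m → m < M → th m ≤ th (m + 1))
    (hthQ : th M ≤ Q)
    (hs1 : ∀ m ∈ Finset.Icc 1 M, ∀ i, i + 1 < th m → y i m = 0)
    (hs2 : ∀ m ∈ Finset.Icc 1 M, ∀ i, th m ≤ i → i ≤ Q →
      y i m = ∑ n ∈ Finset.Icc 1 M, η n * y i n +
        ξ * ∑ n ∈ Finset.Icc 1 M, η n * y (i + 1) n)
    (hs3 : ∀ m ∈ Finset.Icc 2 M, m ≠ mt → 1 ≤ th m → y (th m - 1) m = 0) :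
    ∀ i, th M < i → i ≤ Q →
      (∀ m ∈ Finset.Icc 1 M, y i m = 0) ∧
      ∑ m ∈ Finset.Icc 1 M, η m * y i m = 0 := by
  obtain ⟨hzero, hpow, hnorm, hineq⟩ := hfeas
  have hξpos : 0 < ξ := by
    rw [hξ]; apply div_pos <;> linarith
  have hthle : ∀ m, 1 ≤ m → m ≤ M → th m ≤ th M := by
    intro m h1 h2
    have key : ∀ k, m + k ≤ M → th m ≤ th (m + k) := by
      intro k
      induction k with
      | zero => intro _; simp
      | succ n ih =>
        intro hle
        have h1' := ih (by omega)
        have h2' := hthmono (m + n) (by omega) (by omega)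
        have e : th (m + (n + 1)) = th (m + n + 1) := rfl
        omega
    have := key (M - m) (by omega)
    rwa [show m + (M - m) = M by omega] at this
  have hval : ∀ i, th M ≤ i → i ≤ Q → ∀ m ∈ Finset.Icc 1 M,
      y i m = ∑ n ∈ Finset.Icc 1 M, η n * y i n +
        ξ * ∑ n ∈ Finset.Icc 1 M, η n * y (i + 1) n := by
    intro i hi hiQ m hm
    simp only [Finset.mem_Icc] at hm
    exact hs2 m (by simp [Finset.mem_Icc]; omega) i
      (le_trans (hthle m hm.1 hm.2) hi) hiQ
  have hkey : ∀ i, th M ≤ i → i ≤ Q →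
      ∑ n ∈ Finset.Icc 1 M, η n * y (i + 1) n = 0 := by
    intro i hi hiQ
    have h1 : ∑ m ∈ Finset.Icc 1 M, η m * y i m
        = ∑ m ∈ Finset.Icc 1 M, η m *
          (∑ n ∈ Finset.Icc 1 M, η n * y i n +
            ξ * ∑ n ∈ Finset.Icc 1 M, η n * y (i + 1) n) := by
      apply Finset.sum_congr rfl
      intro m hm
      rw [hval i hi hiQ m hm]
    rw [← Finset.sum_mul, hηsum, one_mul] at h1
    have h2 : ξ * ∑ n ∈ Finset.Icc 1 M, η n * y (i + 1) n = 0 := by linarith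
    rcases mul_eq_zero.mp h2 with h | h
    · exact absurd h (ne_of_gt hξpos)
    · exact h
  have hQ1 : ∑ n ∈ Finset.Icc 1 M, η n * y (Q + 1) n = 0 := by
    apply Finset.sum_eq_zero
    intro n hn
    rw [hzero n hn, mul_zero]
  intro i hi hiQ
  have hπi : ∑ n ∈ Finset.Icc 1 M, η n * y i n = 0 := by
    obtain ⟨j, rfl⟩ : ∃ j, i = j + 1 := ⟨i - 1, by omega⟩
    exact hkey j (by omega) (by omega)
  have hπi1 : ∑ n ∈ Finset.Icc 1 M, η n * y (i + 1) n = 0 := by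
    rcases eq_or_lt_of_le hiQ with rfl | h
    · exact hQ1
    · exact hkey i (by omega) (by omega)
  refine ⟨?_, hπi⟩
  intro m hm
  rw [hval i (by omega) hiQ m hm, hπi, hπi1, mul_zero, add_zero]
end

section
/- (Tightness of the power constraint at the optimum.) Assume p_max < P_th and the set of LP-feasible families is nonempty, and let y* be LP-feasible with D̄(y*) ≤ D̄(y) for all LP-feasible y. Then the average power constraint is tight at y*: P̄(y*) = p_max. (Otherwise a convex combination of y* with the zero-delay point y⁰ given by y⁰_{0,m} = 1 and y⁰_{i,m} = 0 for i ≥ 1 would be LP-feasible with strictly smaller delay.) -/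
/-- Sum against the zero-delay point `y⁰`. -/
lemma aux_sum_y0 (Q M : ℕ) (c : ℕ → ℕ → ℝ) :
    ∑ i ∈ Finset.range (Q + 1), ∑ m ∈ Finset.Icc 1 M,
      c i m * (if i = 0 then (1 : ℝ) else 0) = ∑ m ∈ Finset.Icc 1 M, c 0 m := by
  rw [Finset.sum_eq_single 0]
  · simp
  · intro b _ hb; simp [hb]
  · simp

/- STATEMENT 9 (tightness of the power constraint at the optimum):
If p_max < P_th and y* is LP-feasible and delay-optimal, then
P̄(y*) = p_max. -/
theorem power_constraint_tight_at_optimum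
    (Q M : ℕ) (hQ : 1 ≤ Q) (hM : 1 ≤ M)
    (α : ℝ) (hα0 : 0 < α) (hα1 : α < 1)
    (ξ : ℝ) (hξ : ξ = (1 - α) / α)
    (η Pw : ℕ → ℝ) (hη : ∀ m ∈ Finset.Icc 1 M, 0 < η m)
    (hηsum : ∑ m ∈ Finset.Icc 1 M, η m = 1)
    (hP1 : 0 < Pw 1) (hPmono : ∀ m, 1 ≤ m → m < M → Pw m ≤ Pw (m + 1))
    (pmax : ℝ) (hpmax : 0 < pmax)
    (Pth : ℝ) (hPth : Pth = α * ∑ m ∈ Finset.Icc 1 M, η m * Pw m)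
    (hlt : pmax < Pth)
    (y : ℕ → ℕ → ℝ)
    (hfeas : LPfeasible Q M α ξ η Pw pmax y)
    (hopt : ∀ z, LPfeasible Q M α ξ η Pw pmax z →
      avgDelay Q M α η y ≤ avgDelay Q M α η z) :
    avgPower Q M α η Pw y = pmax := by
  obtain ⟨hzQ, ha, hb, hc⟩ := hfeas
  have hξ0 : 0 ≤ ξ := by rw [hξ]; exact div_nonneg (by linarith) hα0.le
  have hynn : ∀ i ∈ Finset.range (Q + 1), ∀ m ∈ Finset.Icc 1 M, 0 ≤ y i m := by
    intro i hi m hm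
    exact (hc i (Nat.lt_succ_iff.mp (Finset.mem_range.mp hi)) m hm).1
  -- the average delay of y is strictly positive
  have hDnn : ∀ i ∈ Finset.range (Q + 1), 0 ≤ ∑ m ∈ Finset.Icc 1 M, (i : ℝ) * η m * y i m :=
    fun i hi => Finset.sum_nonneg fun m hm =>
      mul_nonneg (mul_nonneg (Nat.cast_nonneg i) (hη m hm).le) (hynn i hi m hm)
  have hDpos : 0 < ∑ i ∈ Finset.range (Q + 1), ∑ m ∈ Finset.Icc 1 M,
      (i : ℝ) * η m * y i m := by
    rcases (Finset.sum_nonneg hDnn).lt_or_eq with h | h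
    · exact h
    · exfalso
      have hall : ∀ i ∈ Finset.range (Q + 1), ∀ m ∈ Finset.Icc 1 M,
          (i : ℝ) * η m * y i m = 0 := by
        intro i hi m hm
        have h1 := (Finset.sum_eq_zero_iff_of_nonneg hDnn).mp h.symm i hi
        exact (Finset.sum_eq_zero_iff_of_nonneg fun m hm =>
          mul_nonneg (mul_nonneg (Nat.cast_nonneg i) (hη m hm).le) (hynn i hi m hm)).mp
          h1 m hm
      have hz1 : ∀ i, 1 ≤ i → i ≤ Q → ∀ m ∈ Finset.Icc 1 M, y i m = 0 := by
        intro i h1i hiQ m hm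
        have h0 := hall i (Finset.mem_range.mpr (Nat.lt_succ_of_le hiQ)) m hm
        have hi0 : (i : ℝ) ≠ 0 := Nat.cast_ne_zero.mpr (by omega)
        have hη0 : η m ≠ 0 := (hη m hm).ne'
        rcases mul_eq_zero.mp h0 with h' | h'
        · rcases mul_eq_zero.mp h' with h'' | h''
          · exact absurd h'' hi0
          · exact absurd h'' hη0
        · exact h'
      have hs0 : ∑ m ∈ Finset.Icc 1 M, η m * y 0 m = 1 := by
        rw [← hb]
        symm
        rw [Finset.sum_eq_single 0]
        · intro b hb' hb0
          refine Finset.sum_eq_zero fun m hm => ?_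
          rw [hz1 b (by omega) (Nat.lt_succ_iff.mp (Finset.mem_range.mp hb')) m hm, mul_zero]
        · simp
      have hle1 : ∀ m ∈ Finset.Icc 1 M, y 0 m ≤ 1 := by
        intro m hm
        have h2 := (hc 0 (Nat.zero_le _) m hm).2
        have hs1 : ∑ n ∈ Finset.Icc 1 M, η n * y (0 + 1) n = 0 :=
          Finset.sum_eq_zero fun n hn => by rw [hz1 1 le_rfl hQ n hn, mul_zero]
        rw [hs0, hs1, mul_zero, add_zero] at h2
        exact h2
      have hone : ∀ m ∈ Finset.Icc 1 M, y 0 m = 1 := by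
        have hsub : ∑ m ∈ Finset.Icc 1 M, η m * (1 - y 0 m) = 0 := by
          simp only [mul_sub, Finset.sum_sub_distrib, mul_one, hηsum, hs0, sub_self]
        intro m hm
        have h3 := (Finset.sum_eq_zero_iff_of_nonneg fun n hn =>
          mul_nonneg (hη n hn).le (by linarith [hle1 n hn])).mp hsub m hm
        rcases mul_eq_zero.mp h3 with h' | h'
        · exact absurd h' (hη m hm).ne'
        · linarith
      have hps : ∑ i ∈ Finset.range (Q + 1), ∑ m ∈ Finset.Icc 1 M, η m * Pw m * y i m
          = ∑ m ∈ Finset.Icc 1 M, η m * Pw m := by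
        rw [Finset.sum_eq_single 0]
        · exact Finset.sum_congr rfl fun m hm => by rw [hone m hm, mul_one]
        · intro b hb' hb0
          refine Finset.sum_eq_zero fun m hm => ?_
          rw [hz1 b (by omega) (Nat.lt_succ_iff.mp (Finset.mem_range.mp hb')) m hm, mul_zero]
        · simp
      rw [hps] at ha
      rw [hPth] at hlt
      linarith
  -- main argument: suppose the power constraint is not tight
  rw [avgPower]
  by_contra hne
  have hPlt : α * ∑ i ∈ Finset.range (Q + 1), ∑ m ∈ Finset.Icc 1 M,
      η m * Pw m * y i m < pmax := lt_of_le_of_ne ha hne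
  set S : ℝ := α * ∑ i ∈ Finset.range (Q + 1), ∑ m ∈ Finset.Icc 1 M,
      η m * Pw m * y i m with hS
  set t : ℝ := (pmax - S) / (Pth - S) with ht
  have hd : 0 < Pth - S := by linarith
  have ht0 : 0 < t := div_pos (by linarith) hd
  have ht1 : t < 1 := (div_lt_one hd).mpr (by linarith)
  have htP : (1 - t) * S + t * Pth = pmax := by
    rw [ht]; field_simp; ring
  set w : ℕ → ℕ → ℝ := fun i _ => if i = 0 then (1 : ℝ) else 0 with hw
  set z : ℕ → ℕ → ℝ := fun i m => (1 - t) * y i m + t * w i m with hzdef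
  have hcomb : ∀ c : ℕ → ℕ → ℝ,
      ∑ i ∈ Finset.range (Q + 1), ∑ m ∈ Finset.Icc 1 M, c i m * z i m
      = (1 - t) * (∑ i ∈ Finset.range (Q + 1), ∑ m ∈ Finset.Icc 1 M, c i m * y i m)
        + t * (∑ i ∈ Finset.range (Q + 1), ∑ m ∈ Finset.Icc 1 M, c i m * w i m) := by
    intro c
    have h : ∀ i m, c i m * z i m
        = (1 - t) * (c i m * y i m) + t * (c i m * w i m) := by
      intro i m; simp only [hzdef]; ring
    simp only [h, Finset.sum_add_distrib, ← Finset.mul_sum]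
  have hsz : ∀ j, ∑ n ∈ Finset.Icc 1 M, η n * z j n
      = (1 - t) * (∑ n ∈ Finset.Icc 1 M, η n * y j n)
        + t * (if j = 0 then 1 else 0) := by
    intro j
    have h : ∀ n, η n * z j n = (1 - t) * (η n * y j n) + t * (η n * w j n) := by
      intro n; simp only [hzdef]; ring
    rw [Finset.sum_congr rfl fun n _ => h n, Finset.sum_add_distrib,
      ← Finset.mul_sum, ← Finset.mul_sum]
    congr 2
    simp only [hw]
    by_cases hj : j = 0 <;> simp [hj, hηsum]
  have hwsum : ∀ c : ℕ → ℕ → ℝ,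
      ∑ i ∈ Finset.range (Q + 1), ∑ m ∈ Finset.Icc 1 M, c i m * w i m
      = ∑ m ∈ Finset.Icc 1 M, c 0 m := by
    intro c
    simp only [hw]
    exact aux_sum_y0 Q M c
  have hzfeas : LPfeasible Q M α ξ η Pw pmax z := by
    refine ⟨?_, ?_, ?_, ?_⟩
    · intro m hm
      simp only [hzdef, hw, hzQ m hm, Nat.succ_ne_zero, if_false, mul_zero, add_zero]
    · -- power constraint
      have h1 := hcomb fun _ m => η m * Pw m
      have h2 := hwsum fun _ m => η m * Pw m
      rw [h1, h2]
      have : α * ((1 - t) * (∑ i ∈ Finset.range (Q + 1), ∑ m ∈ Finset.Icc 1 M,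
          η m * Pw m * y i m) + t * ∑ m ∈ Finset.Icc 1 M, η m * Pw m)
          = (1 - t) * S + t * Pth := by
        rw [hS, hPth]; ring
      rw [this, htP]
    · -- normalization
      have h1 := hcomb fun _ m => η m
      have h2 := hwsum fun _ m => η m
      rw [h1, h2, hb, hηsum]
      ring
    · -- inequality constraints
      intro i hi m hm
      obtain ⟨hy1, hy2⟩ := hc i hi m hm
      constructor
      · simp only [hzdef, hw]
        have hwnn : (0 : ℝ) ≤ if i = 0 then (1 : ℝ) else 0 := by positivity
        have := mul_nonneg ht0.le hwnn
        nlinarith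
      · rw [hsz i, hsz (i + 1), if_neg (Nat.succ_ne_zero i)]
        simp only [hzdef, hw]
        have h3 := mul_le_mul_of_nonneg_left hy2 (by linarith : (0 : ℝ) ≤ 1 - t)
        nlinarith
  have hle := hopt z hzfeas
  rw [avgDelay, avgDelay] at hle
  have hDz : ∑ i ∈ Finset.range (Q + 1), ∑ m ∈ Finset.Icc 1 M, (i : ℝ) * η m * z i m
      = (1 - t) * ∑ i ∈ Finset.range (Q + 1), ∑ m ∈ Finset.Icc 1 M,
        (i : ℝ) * η m * y i m := by
    have h1 := hcomb fun i m => (i : ℝ) * η m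
    have h2 := hwsum fun i m => (i : ℝ) * η m
    rw [h1, h2]
    simp
  rw [hDz] at hle
  have hα' : 0 < 1 / α := by positivity
  have hle2 : ∑ i ∈ Finset.range (Q + 1), ∑ m ∈ Finset.Icc 1 M, (i : ℝ) * η m * y i m
      ≤ (1 - t) * ∑ i ∈ Finset.range (Q + 1), ∑ m ∈ Finset.Icc 1 M,
        (i : ℝ) * η m * y i m := le_of_mul_le_mul_left hle hα'
  nlinarith [mul_pos ht0 hDpos]
end

section
/- (Theorem 3, equation (26).) Let π_0,…,π_Q ≥ 0 with π_{Q+1} := 0, let g_{i,m}, f_{i,m} ∈ [0,1], and suppose y_{i,m} = π_i g_{i,m} + ξ·π_{i+1} f_{i+1,m} for all 0 ≤ i ≤ Q, 1 ≤ m ≤ M. Suppose there are thresholds 0 = i_1* ≤ … ≤ i_M* ≤ Q such that π_i > 0 for 0 ≤ i ≤ i_M*, π_i = 0 for i > i_M*, and y has the structure y_{i,m} = 0 for i < i_m* − 1 and y_{i,m} = π_i + ξ·π_{i+1} for i_m* ≤ i ≤ i_M*. Then for every channel state m: g_{i,m} = 0 for all i < i_m* − 1 with i ≤ i_M*, f_{i+1,m}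 = 0 for all i < i_m* − 1 with i + 1 ≤ i_M*, g_{i,m} = 1 for all i_m* ≤ i ≤ i_M*, and f_{i+1,m} = 1 for all i_m* ≤ i ≤ i_M* − 1. In other words, the optimal scheduling is threshold-based: given channel state m, the source never transmits when the queue length is below i_m* − 1 and always transmits (with power P_m) when the queue length is at least i_m*. -/
/- STATEMENT 14 (Theorem 3, equation (26)): If the transformed variables
y_{i,m} = π_i g_{i,m} + ξ π_{i+1} f_{i+1,m} have the threshold structure
(y_{i,m} = 0 for i < i_m* − 1 and y_{i,m} = π_i + ξ π_{i+1} for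
i_m* ≤ i ≤ i_M*), with π_i > 0 for i ≤ i_M* and π_i = 0 for i > i_M*,
then the optimal scheduling is threshold based: g_{i,m} = f_{i+1,m} = 0
below the threshold and g_{i,m} = f_{i+1,m} = 1 at or above it. -/
theorem optimal_transmission_probabilities_threshold
    (Q M : ℕ) (hQ : 1 ≤ Q) (hM : 1 ≤ M)
    (α : ℝ) (hα0 : 0 < α) (hα1 : α < 1)
    (ξ : ℝ) (hξ : ξ = (1 - α) / α)
    (pi : ℕ → ℝ) (g f y : ℕ → ℕ → ℝ)
    (hpi_nonneg : ∀ i, i ≤ Q → 0 ≤ pi i)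
    (hpiQ1 : pi (Q + 1) = 0)
    (hg : ∀ i, i ≤ Q → ∀ m ∈ Finset.Icc 1 M, g i m ∈ Set.Icc (0 : ℝ) 1)
    (hf : ∀ i, 1 ≤ i → i ≤ Q + 1 → ∀ m ∈ Finset.Icc 1 M,
      f i m ∈ Set.Icc (0 : ℝ) 1)
    (hy : ∀ i, i ≤ Q → ∀ m ∈ Finset.Icc 1 M,
      y i m = pi i * g i m + ξ * pi (i + 1) * f (i + 1) m)
    (th : ℕ → ℕ)
    (hth1 : th 1 = 0)
    (hthmono : ∀ m, 1 ≤ m → m < M → th m ≤ th (m + 1))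
    (hthQ : th M ≤ Q)
    (hpi_pos : ∀ i, i ≤ th M → 0 < pi i)
    (hpi_zero : ∀ i, th M < i → i ≤ Q + 1 → pi i = 0)
    (hy0 : ∀ m ∈ Finset.Icc 1 M, ∀ i, i + 1 < th m → i ≤ Q → y i m = 0)
    (hyfull : ∀ m ∈ Finset.Icc 1 M, ∀ i, th m ≤ i → i ≤ th M →
      y i m = pi i + ξ * pi (i + 1)) :
    ∀ m ∈ Finset.Icc 1 M,
      (∀ i, i + 1 < th m → i ≤ th M → g i m = 0) ∧
      (∀ i, i + 1 < th m → i + 1 ≤ th M → f (i + 1) m = 0) ∧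
      (∀ i, th m ≤ i → i ≤ th M → g i m = 1) ∧
      (∀ i, th m ≤ i → i + 1 ≤ th M → f (i + 1) m = 1) := by
  have hξpos : 0 < ξ := by
    rw [hξ]; exact div_pos (by linarith) hα0
  have hpin : ∀ j, j ≤ Q + 1 → 0 ≤ pi j := by
    intro j hj
    rcases Nat.lt_or_ge j (Q + 1) with h | h
    · exact hpi_nonneg j (by omega)
    · have : j = Q + 1 := by omega
      simp [this, hpiQ1]
  intro m hm
  refine ⟨?_, ?_, ?_, ?_⟩
  · -- g = 0 below threshold
    intro i hi hiM
    have hiQ : i ≤ Q := le_trans hiM hthQ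
    have heq := hy i hiQ m hm
    have hy0' := hy0 m hm i hi hiQ
    have hg' := hg i hiQ m hm
    have hf' := hf (i + 1) (by omega) (by omega) m hm
    have hpii : 0 < pi i := hpi_pos i hiM
    have hpi1 : 0 ≤ pi (i + 1) := hpin (i + 1) (by omega)
    have hme : pi i * g i m = 0 := by
      nlinarith [hg'.1, hg'.2, hf'.1, hf'.2,
        mul_nonneg hpii.le hg'.1,
        mul_nonneg (mul_nonneg hξpos.le hpi1) hf'.1]
    rcases mul_eq_zero.mp hme with h | h
    · exact absurd h hpii.ne'
    · exact h
  · -- f = 0 below threshold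
    intro i hi hiM
    have hiQ : i ≤ Q := by omega
    have heq := hy i hiQ m hm
    have hy0' := hy0 m hm i hi hiQ
    have hg' := hg i hiQ m hm
    have hf' := hf (i + 1) (by omega) (by omega) m hm
    have hpii : 0 ≤ pi i := hpin i (by omega)
    have hpi1 : 0 < pi (i + 1) := hpi_pos (i + 1) hiM
    have hme : ξ * pi (i + 1) * f (i + 1) m = 0 := by
      nlinarith [hg'.1, hg'.2, hf'.1, hf'.2,
        mul_nonneg hpii hg'.1,
        mul_nonneg (mul_nonneg hξpos.le hpi1.le) hf'.1]
    rcases mul_eq_zero.mp hme with h | h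
    · rcases mul_eq_zero.mp h with h' | h'
      · exact absurd h' hξpos.ne'
      · exact absurd h' hpi1.ne'
    · exact h
  · -- g = 1 at/above threshold
    intro i hi hiM
    have hiQ : i ≤ Q := le_trans hiM hthQ
    have heq := hy i hiQ m hm
    have hyf := hyfull m hm i hi hiM
    have hg' := hg i hiQ m hm
    have hf' := hf (i + 1) (by omega) (by omega) m hm
    have hpii : 0 < pi i := hpi_pos i hiM
    have hpi1 : 0 ≤ pi (i + 1) := hpin (i + 1) (by omega)
    have hme : pi i * (1 - g i m) = 0 := by
      nlinarith [hg'.1, hg'.2, hf'.1, hf'.2,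
        mul_nonneg hpii.le (sub_nonneg.mpr hg'.2),
        mul_nonneg (mul_nonneg hξpos.le hpi1) (sub_nonneg.mpr hf'.2)]
    rcases mul_eq_zero.mp hme with h | h
    · exact absurd h hpii.ne'
    · linarith
  · -- f = 1 at/above threshold
    intro i hi hiM
    have hiQ : i ≤ Q := by omega
    have heq := hy i hiQ m hm
    have hyf := hyfull m hm i hi (by omega)
    have hg' := hg i hiQ m hm
    have hf' := hf (i + 1) (by omega) (by omega) m hm
    have hpii : 0 ≤ pi i := hpin i (by omega)
    have hpi1 : 0 < pi (i + 1) := hpi_pos (i + 1) hiM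
    have hme : ξ * pi (i + 1) * (1 - f (i + 1) m) = 0 := by
      nlinarith [hg'.1, hg'.2, hf'.1, hf'.2,
        mul_nonneg hpii (sub_nonneg.mpr hg'.2),
        mul_nonneg (mul_nonneg hξpos.le hpi1.le) (sub_nonneg.mpr hf'.2)]
    rcases mul_eq_zero.mp hme with h | h
    · rcases mul_eq_zero.mp h with h' | h'
      · exact absurd h' hξpos.ne'
      · exact absurd h' hpi1.ne'
    · linarith
end

section
/- (Corollary 2: closed-form threshold for the two-state channel, equation (31).) Let r > 0 and π_0 ∈ (0,1], and suppose there exists a nonnegative integer k with π_0·Σ_{i=0}^{k−1} r^i > 1. If r ≠ 1, then 1 − (1 − r)/π_0 > 0 and the largest nonnegative integer k satisfying π_0·Σ_{i=0}^{k−1} r^i ≤ 1 equals ⌊log_r(1 − (1/π_0)·(1 − r))⌋; if r = 1, the largest such k equals ⌊1/π_0⌋. In the two-state channel setting M = 2 with r = (1 − η_1)/(η_1·ξ) and π_0 = π_0* the optimal empty-queue probability, this largest k is the optimal queue-length threshold i_2* for channel state 2. -/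
/- STATEMENT 16 (Corollary 2, equation (31): closed-form threshold for the
two-state channel): Let r > 0 and π_0 ∈ (0,1], and suppose some k satisfies
π_0 Σ_{i=0}^{k−1} r^i > 1. If r ≠ 1 then 1 − (1−r)/π_0 > 0 and the largest
k with π_0 Σ_{i=0}^{k−1} r^i ≤ 1 equals ⌊log_r(1 − (1/π_0)(1−r))⌋; if r = 1
the largest such k equals ⌊1/π_0⌋. (In the two-state channel setting,
r = (1−η_1)/(η_1 ξ) and this largest k is the optimal threshold i_2*.) -/
lemma aux_greatest (L : ℝ) (P : ℕ → Prop) (h : ∀ k, P k ↔ (k : ℝ) ≤ L) (h0 : P 0) :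
    IsGreatest {k : ℕ | P k} ⌊L⌋.toNat ∧ ((⌊L⌋.toNat : ℕ) : ℤ) = ⌊L⌋ := by
  have hL : 0 ≤ L := by simpa using (h 0).mp h0
  have hfl : 0 ≤ ⌊L⌋ := Int.floor_nonneg.mpr hL
  have hcast : ((⌊L⌋.toNat : ℕ) : ℤ) = ⌊L⌋ := Int.toNat_of_nonneg hfl
  refine ⟨⟨?_, ?_⟩, hcast⟩
  · rw [Set.mem_setOf_eq, h]
    have hc : ((⌊L⌋.toNat : ℕ) : ℝ) = (⌊L⌋ : ℝ) := by exact_mod_cast hcast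
    rw [hc]; exact Int.floor_le L
  · intro k hk
    have h1 : (k : ℝ) ≤ L := (h k).mp hk
    have h2 : (k : ℤ) ≤ ⌊L⌋ := Int.le_floor.mpr (by exact_mod_cast h1)
    omega

theorem two_state_threshold_closed_form
    (r pi0 : ℝ) (hr : 0 < r) (hpi0 : 0 < pi0) (hpi0le : pi0 ≤ 1)
    (hex : ∃ k : ℕ, 1 < pi0 * ∑ i ∈ Finset.range k, r ^ i) :
    (r ≠ 1 →
      0 < 1 - (1 - r) / pi0 ∧
      ∃ k : ℕ,
        IsGreatest {k : ℕ | pi0 * ∑ i ∈ Finset.range k, r ^ i ≤ 1} k ∧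
        (k : ℤ) = ⌊Real.logb r (1 - (1 / pi0) * (1 - r))⌋) ∧
    (r = 1 →
      ∃ k : ℕ,
        IsGreatest {k : ℕ | pi0 * ∑ i ∈ Finset.range k, r ^ i ≤ 1} k ∧
        (k : ℤ) = ⌊1 / pi0⌋) := by
  constructor
  · intro hr1
    set c : ℝ := 1 - (1 - r) / pi0 with hcdef
    have hpi0ne' : pi0 ≠ 0 := ne_of_gt hpi0
    have hceq : 1 - (1 / pi0) * (1 - r) = c := by rw [hcdef]; field_simp
    have hpi0ne : pi0 ≠ 0 := ne_of_gt hpi0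
    -- positivity of c
    have hcpos : 0 < c := by
      rcases lt_or_gt_of_ne hr1 with hlt | hgt
      · -- r < 1 : use hex
        obtain ⟨k, hk⟩ := hex
        rw [geom_sum_eq hr1] at hk
        have h1r : (0 : ℝ) < 1 - r := by linarith
        have hk' : 1 - r < pi0 * (1 - r ^ k) := by
          rw [show (r ^ k - 1) / (r - 1) = (1 - r ^ k) / (1 - r) by
            rw [← neg_div_neg_eq]; ring_nf] at hk
          rw [mul_div_assoc'] at hk
          rw [one_lt_div h1r] at hk
          exact hk
        have hrk : (0 : ℝ) ≤ r ^ k := pow_nonneg hr.le k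
        rw [hcdef, sub_pos, div_lt_one hpi0]
        nlinarith
      · have : 0 < (r - 1) / pi0 := div_pos (by linarith) hpi0
        rw [hcdef]
        have : (1 - r) / pi0 = -((r - 1) / pi0) := by ring
        rw [this]; linarith
    refine ⟨hcpos, ?_⟩
    have hc1ne : c ≠ 1 ∨ True := Or.inr trivial
    -- membership iff
    have hlogr : Real.log r ≠ 0 := by
      intro h
      rcases Real.log_eq_zero.mp h with h | h | h
      · exact absurd h (ne_of_gt hr)
      · exact hr1 h
      · linarith
    have hiff : ∀ k : ℕ, (pi0 * ∑ i ∈ Finset.range k, r ^ i ≤ 1) ↔ (k : ℝ) ≤ Real.logb r c := by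
      intro k
      rw [geom_sum_eq hr1]
      have hrk : (0 : ℝ) < r ^ k := pow_pos hr k
      rcases lt_or_gt_of_ne hr1 with hlt | hgt
      · -- r < 1
        have h1r : (0 : ℝ) < 1 - r := by linarith
        have step1 : pi0 * ((r ^ k - 1) / (r - 1)) ≤ 1 ↔ c ≤ r ^ k := by
          have hne1 : r - 1 ≠ 0 := by intro h; apply hr1; linarith
          have hne2 : (1 : ℝ) - r ≠ 0 := ne_of_gt h1r
          rw [show pi0 * ((r ^ k - 1) / (r - 1)) = pi0 * (1 - r ^ k) / (1 - r) by
            rw [mul_div_assoc', show pi0 * (r ^ k - 1) = -(pi0 * (1 - r ^ k)) by ring,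
              show r - 1 = -(1 - r) by ring, neg_div_neg_eq]]
          rw [div_le_one h1r]
          rw [show (c ≤ r ^ k) ↔ (pi0 * c ≤ pi0 * r ^ k) from (mul_le_mul_iff_right₀ hpi0).symm]
          have hpc : pi0 * c = pi0 - (1 - r) := by rw [hcdef]; field_simp
          rw [hpc]
          constructor <;> intro h <;> nlinarith
        rw [step1]
        have hlr : Real.log r < 0 := Real.log_neg hr hlt
        rw [Real.logb, le_div_iff_of_neg hlr]
        rw [← Real.log_pow]
        exact (Real.log_le_log_iff hcpos hrk).symm
      · -- r > 1
        have h1r : (0 : ℝ) < r - 1 := by linarith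
        have step1 : pi0 * ((r ^ k - 1) / (r - 1)) ≤ 1 ↔ r ^ k ≤ c := by
          rw [mul_div_assoc', div_le_one h1r]
          rw [show (r ^ k ≤ c) ↔ (pi0 * r ^ k ≤ pi0 * c) from (mul_le_mul_iff_right₀ hpi0).symm]
          have hpc : pi0 * c = pi0 - (1 - r) := by rw [hcdef]; field_simp
          rw [hpc]
          constructor <;> intro h <;> nlinarith
        rw [step1]
        have hlr : 0 < Real.log r := Real.log_pos hgt
        rw [Real.logb, le_div_iff₀ hlr]
        rw [← Real.log_pow]
        exact (Real.log_le_log_iff hrk hcpos).symm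
    have h0 : pi0 * ∑ i ∈ Finset.range 0, r ^ i ≤ 1 := by simp
    obtain ⟨hg, hc⟩ := aux_greatest (Real.logb r c) _ hiff h0
    exact ⟨⌊Real.logb r c⌋.toNat, hg, by rw [hceq]; exact hc⟩
  · intro hr1
    subst hr1
    have hiff : ∀ k : ℕ, (pi0 * ∑ i ∈ Finset.range k, (1:ℝ) ^ i ≤ 1) ↔ (k : ℝ) ≤ 1 / pi0 := by
      intro k
      simp only [one_pow, Finset.sum_const, Finset.card_range, nsmul_eq_mul, mul_one]
      rw [le_div_iff₀ hpi0, mul_comm]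
    have h0 : pi0 * ∑ i ∈ Finset.range 0, (1:ℝ) ^ i ≤ 1 := by simp
    obtain ⟨hg, hc⟩ := aux_greatest (1 / pi0) _ hiff h0
    exact ⟨⌊1 / pi0⌋.toNat, hg, hc⟩
end
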